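/- Let σ > 0, let P be a σ-smooth probability measure on [0,1]², let K ≥ 2 be an integer, let T ∈ ℕ, and let (L_t)_{t=1}^T be probability measures on [0,1]² with Σ_{t=1}^T ‖L_t − P‖_TV ≤ C. Then for every probability measure γ on [0,1]² satisfying Σ_{t=1}^T ∫∫ Rev(p,q,s,b) dγ(p,q) dL_t(s,b) ≥ 0, there exists a probability measure γ̂ supported on the grid G_K such that Σ_{t=1}^T ∫∫ GFT(p,q,s,b) dγ̂(p,q) dL_t(s,b) ≥ Σ_{t=1}^T ∫∫ GFT(p,q,s,b) dγ(p,q) dL_t(s,b) − 2T/(σ(K−1)) − 2C, and Σ_{t=1}^T ∫∫ Rev(p,q,s,b) dγ̂(p,q) dL_t(s,b) ≥ −2T/(σ(K−1)) − 2C. -/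

import Mathlib

open MeasureTheory

/-- Gain from trade. -/
noncomputable def GFT (p q s b : ℝ) : ℝ := (b - s) * (if s ≤ p ∧ q ≤ b then 1 else 0)

/-- Revenue. -/
noncomputable def Rev (p q s b : ℝ) : ℝ := (q - p) * (if s ≤ p ∧ q ≤ b then 1 else 0)

/-- The uniform grid `G_K = {(i/(K-1), j/(K-1)) : i, j ∈ {0,…,K-1}}`. -/
def grid (K : ℕ) : Set (ℝ × ℝ) :=
  {x | ∃ i j : ℕ, i < K ∧ j < K ∧ x.1 = (i : ℝ) / ((K : ℝ) - 1) ∧ x.2 = (j : ℝ) / ((K : ℝ) - 1)}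

/-- Total variation norm of the difference of two finite measures. -/
noncomputable def tvDist (μ ν : Measure (ℝ × ℝ)) [IsFiniteMeasure μ] [IsFiniteMeasure ν] : ℝ :=
  ((μ.toSignedMeasure - ν.toSignedMeasure).totalVariation Set.univ).toReal

/-- The box [0,1]². -/
def Box : Set (ℝ × ℝ) := Set.Icc (0:ℝ) 1 ×ˢ Set.Icc (0:ℝ) 1

lemma measurableSet_Box : MeasurableSet Box :=
  (measurableSet_Icc).prod measurableSet_Icc

/-- Rounding map: round first coordinate down, second up, to the grid. -/
noncomputable def rnd (K : ℕ) (x : ℝ × ℝ) : ℝ × ℝ :=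
  (((⌊x.1 * ((K:ℝ)-1)⌋ : ℤ) : ℝ) / ((K:ℝ)-1), ((⌈x.2 * ((K:ℝ)-1)⌉ : ℤ) : ℝ) / ((K:ℝ)-1))

lemma measurable_rnd (K : ℕ) : Measurable (rnd K) := by
  apply Measurable.prod
  · exact (measurable_from_top.comp ((measurable_fst.mul_const _).floor)).div_const _
  · exact (measurable_from_top.comp ((measurable_snd.mul_const _).ceil)).div_const _

lemma Kpos (K : ℕ) (hK : 2 ≤ K) : (0:ℝ) < (K:ℝ) - 1 := by
  have : (2:ℝ) ≤ (K:ℝ) := by exact_mod_cast hK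
  linarith

lemma rnd_fst_le (K : ℕ) (hK : 2 ≤ K) (x : ℝ × ℝ) : (rnd K x).1 ≤ x.1 := by
  have hc := Kpos K hK
  rw [rnd, div_le_iff₀ hc]
  exact Int.floor_le _

lemma rnd_fst_ge (K : ℕ) (hK : 2 ≤ K) (x : ℝ × ℝ) : x.1 - 1/((K:ℝ)-1) ≤ (rnd K x).1 := by
  have hc := Kpos K hK
  rw [rnd, le_div_iff₀ hc, sub_mul, div_mul_cancel₀ _ (ne_of_gt hc)]
  have := Int.sub_one_lt_floor (x.1 * ((K:ℝ)-1))
  linarith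

lemma rnd_snd_ge (K : ℕ) (hK : 2 ≤ K) (x : ℝ × ℝ) : x.2 ≤ (rnd K x).2 := by
  have hc := Kpos K hK
  rw [rnd, le_div_iff₀ hc]
  exact Int.le_ceil _

lemma rnd_snd_le (K : ℕ) (hK : 2 ≤ K) (x : ℝ × ℝ) : (rnd K x).2 ≤ x.2 + 1/((K:ℝ)-1) := by
  have hc := Kpos K hK
  rw [rnd, div_le_iff₀ hc, add_mul, div_mul_cancel₀ _ (ne_of_gt hc)]
  have := Int.ceil_lt_add_one (x.2 * ((K:ℝ)-1))
  linarith

lemma rnd_mem_grid (K : ℕ) (hK : 2 ≤ K) {x : ℝ × ℝ} (hx : x ∈ Box) : rnd K x ∈ grid K := by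
  have hc := Kpos K hK
  obtain ⟨⟨h01, h11⟩, h02, h12⟩ := hx
  have hcK : ((K:ℝ) - 1) = ((K - 1 : ℕ) : ℝ) := by
    have : (1:ℕ) ≤ K := by omega
    push_cast [this]; ring
  have hfl0 : 0 ≤ ⌊x.1 * ((K:ℝ)-1)⌋ := Int.floor_nonneg.2 (by positivity)
  have hflK : ⌊x.1 * ((K:ℝ)-1)⌋ ≤ (K - 1 : ℕ) := by
    have : x.1 * ((K:ℝ)-1) ≤ ((K-1:ℕ):ℝ) := by
      rw [← hcK]; nlinarith
    exact_mod_cast (Int.floor_le_floor this).trans (le_of_eq (Int.floor_natCast _))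
  have hce0 : 0 ≤ ⌈x.2 * ((K:ℝ)-1)⌉ := Int.ceil_nonneg (by positivity)
  have hceK : ⌈x.2 * ((K:ℝ)-1)⌉ ≤ (K - 1 : ℕ) := by
    have : x.2 * ((K:ℝ)-1) ≤ ((K-1:ℕ):ℝ) := by
      rw [← hcK]; nlinarith
    exact_mod_cast (Int.ceil_le_ceil this).trans (le_of_eq (Int.ceil_natCast _))
  refine ⟨(⌊x.1 * ((K:ℝ)-1)⌋).toNat, (⌈x.2 * ((K:ℝ)-1)⌉).toNat, ?_, ?_, ?_, ?_⟩
  · omega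
  · omega
  · have h : (((⌊x.1 * ((K:ℝ)-1)⌋).toNat : ℕ) : ℝ) = ((⌊x.1 * ((K:ℝ)-1)⌋ : ℤ) : ℝ) := by
      exact_mod_cast congrArg (fun z : ℤ => (z:ℝ)) (Int.toNat_of_nonneg hfl0)
    rw [rnd, h]
  · have h : (((⌈x.2 * ((K:ℝ)-1)⌉).toNat : ℕ) : ℝ) = ((⌈x.2 * ((K:ℝ)-1)⌉ : ℤ) : ℝ) := by
      exact_mod_cast congrArg (fun z : ℤ => (z:ℝ)) (Int.toNat_of_nonneg hce0)
    rw [rnd, h]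

lemma rnd_mem_Box (K : ℕ) (hK : 2 ≤ K) {x : ℝ × ℝ} (hx : x ∈ Box) : rnd K x ∈ Box := by
  have hc := Kpos K hK
  obtain ⟨⟨h01, h11⟩, h02, h12⟩ := hx
  have hcK : ((K:ℝ) - 1) = ((K - 1 : ℕ) : ℝ) := by
    have : (1:ℕ) ≤ K := by omega
    push_cast [this]; ring
  constructor
  · constructor
    · rw [rnd]; positivity
    · rw [rnd, div_le_one hc]
      have : x.1 * ((K:ℝ)-1) ≤ ((K:ℝ)-1) := by nlinarith
      calc ((⌊x.1 * ((K:ℝ)-1)⌋:ℤ):ℝ) ≤ x.1 * ((K:ℝ)-1) := Int.floor_le _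
        _ ≤ _ := this
  · constructor
    · rw [rnd]
      have h0 : (0:ℝ) ≤ x.2 * ((K:ℝ)-1) := by positivity
      have := (Int.le_ceil (x.2 * ((K:ℝ)-1))).trans' h0
      positivity
    · rw [rnd, div_le_one hc]
      have hceK : ⌈x.2 * ((K:ℝ)-1)⌉ ≤ (K - 1 : ℕ) := by
        have : x.2 * ((K:ℝ)-1) ≤ ((K-1:ℕ):ℝ) := by rw [← hcK]; nlinarith
        exact_mod_cast (Int.ceil_le_ceil this).trans (le_of_eq (Int.ceil_natCast _))
      calc ((⌈x.2 * ((K:ℝ)-1)⌉:ℤ):ℝ) ≤ ((K-1:ℕ):ℝ) := by exact_mod_cast hceK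
        _ = (K:ℝ)-1 := hcK.symm

lemma tvDist_nonneg (μ ν : Measure (ℝ × ℝ)) [IsFiniteMeasure μ] [IsFiniteMeasure ν] :
    0 ≤ tvDist μ ν := ENNReal.toReal_nonneg

lemma tv_bound (μ ν : Measure (ℝ × ℝ)) [IsFiniteMeasure μ] [IsFiniteMeasure ν] {A : Set (ℝ × ℝ)}
    (hA : MeasurableSet A) : (μ A).toReal ≤ (ν A).toReal + tvDist μ ν := by
  set s := μ.toSignedMeasure - ν.toSignedMeasure with hs
  have h1 : s A = (μ A).toReal - (ν A).toReal := Measure.toSignedMeasure_sub_apply hA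
  have h2 : s A = (s.toJordanDecomposition.posPart A).toReal
      - (s.toJordanDecomposition.negPart A).toReal := by
    conv_lhs => rw [← s.toSignedMeasure_toJordanDecomposition]
    rw [JordanDecomposition.toSignedMeasure]
    exact Measure.toSignedMeasure_sub_apply hA
  have h3 : tvDist μ ν = (s.toJordanDecomposition.posPart Set.univ).toReal
      + (s.toJordanDecomposition.negPart Set.univ).toReal := by
    rw [tvDist, ← hs, SignedMeasure.totalVariation, Measure.add_apply,
      ENNReal.toReal_add (measure_ne_top _ _) (measure_ne_top _ _)]
  have h4 : (s.toJordanDecomposition.posPart A).toReal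
      ≤ (s.toJordanDecomposition.posPart Set.univ).toReal :=
    ENNReal.toReal_mono (measure_ne_top _ _) (measure_mono (Set.subset_univ _))
  have h5 : (0:ℝ) ≤ (s.toJordanDecomposition.negPart A).toReal := ENNReal.toReal_nonneg
  have h6 : (0:ℝ) ≤ (s.toJordanDecomposition.negPart Set.univ).toReal := ENNReal.toReal_nonneg
  have h7 : (0:ℝ) ≤ (ν A).toReal := ENNReal.toReal_nonneg
  linarith
lemma ae_mem_Box {ν : Measure (ℝ × ℝ)} (hν : ν Boxᶜ = 0) : ∀ᵐ y ∂ν, y ∈ Box := by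
  rw [MeasureTheory.ae_iff]
  exact hν

lemma measurable_GFT (p q : ℝ) : Measurable fun y : ℝ × ℝ => GFT p q y.1 y.2 := by
  unfold GFT
  exact (measurable_snd.sub measurable_fst).mul
    (Measurable.ite ((measurableSet_le measurable_fst measurable_const).inter
      (measurableSet_le measurable_const measurable_snd)) measurable_const measurable_const)

lemma measurable_Rev (p q : ℝ) : Measurable fun y : ℝ × ℝ => Rev p q y.1 y.2 := by
  unfold Rev
  exact measurable_const.mul
    (Measurable.ite ((measurableSet_le measurable_fst measurable_const).inter
      (measurableSet_le measurable_const measurable_snd)) measurable_const measurable_const)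

lemma measurable_GFT2 : Measurable fun z : (ℝ × ℝ) × (ℝ × ℝ) => GFT z.1.1 z.1.2 z.2.1 z.2.2 := by
  unfold GFT
  exact ((measurable_snd.snd).sub (measurable_snd.fst)).mul
    (Measurable.ite ((measurableSet_le measurable_snd.fst measurable_fst.fst).inter
      (measurableSet_le measurable_fst.snd measurable_snd.snd)) measurable_const measurable_const)

lemma measurable_Rev2 : Measurable fun z : (ℝ × ℝ) × (ℝ × ℝ) => Rev z.1.1 z.1.2 z.2.1 z.2.2 := by
  unfold Rev
  exact ((measurable_fst.snd).sub (measurable_fst.fst)).mul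
    (Measurable.ite ((measurableSet_le measurable_snd.fst measurable_fst.fst).inter
      (measurableSet_le measurable_fst.snd measurable_snd.snd)) measurable_const measurable_const)

lemma abs_GFT_le {p q : ℝ} {y : ℝ × ℝ} (hy : y ∈ Box) : |GFT p q y.1 y.2| ≤ 1 := by
  obtain ⟨⟨h1, h2⟩, h3, h4⟩ := hy
  rw [GFT]
  split_ifs with h
  · rw [mul_one, abs_le]; constructor <;> linarith
  · simp

lemma abs_Rev_le {p q : ℝ} (hp : p ∈ Set.Icc (0:ℝ) 1) (hq : q ∈ Set.Icc (0:ℝ) 1) (y : ℝ × ℝ) :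
    |Rev p q y.1 y.2| ≤ 1 := by
  obtain ⟨h1, h2⟩ := hp; obtain ⟨h3, h4⟩ := hq
  rw [Rev]
  split_ifs with h
  · rw [mul_one, abs_le]; constructor <;> linarith
  · simp

lemma integrable_GFT (ν : Measure (ℝ × ℝ)) [IsFiniteMeasure ν] (hν : ν Boxᶜ = 0) (p q : ℝ) :
    Integrable (fun y : ℝ × ℝ => GFT p q y.1 y.2) ν := by
  refine ⟨(measurable_GFT p q).aestronglyMeasurable, HasFiniteIntegral.of_bounded (C := 1) ?_⟩
  filter_upwards [ae_mem_Box hν] with y hy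
  simpa [Real.norm_eq_abs] using abs_GFT_le (p := p) (q := q) hy

lemma integrable_Rev (ν : Measure (ℝ × ℝ)) [IsFiniteMeasure ν] (p q : ℝ) :
    Integrable (fun y : ℝ × ℝ => Rev p q y.1 y.2) ν := by
  refine ⟨(measurable_Rev p q).aestronglyMeasurable,
    HasFiniteIntegral.of_bounded (C := |q - p|) (ae_of_all _ fun y => ?_)⟩
  rw [Rev, Real.norm_eq_abs]
  split_ifs with h
  · rw [mul_one]
  · simp [abs_nonneg]

lemma step (σ : ℝ) (hσ : 0 < σ) (P : Measure (ℝ × ℝ)) [IsProbabilityMeasure P]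
    (hPsupp : P Boxᶜ = 0)
    (hsmooth : ∀ A : Set (ℝ × ℝ), MeasurableSet A → P A ≤ volume A / ENNReal.ofReal σ)
    (K : ℕ) (hK : 2 ≤ K) (ν : Measure (ℝ × ℝ)) [IsProbabilityMeasure ν] (hν : ν Boxᶜ = 0)
    {x : ℝ × ℝ} (hx : x ∈ Box) :
    (∫ y, GFT x.1 x.2 y.1 y.2 ∂ν) - (2/(σ*((K:ℝ)-1)) + tvDist ν P)
      ≤ ∫ y, GFT (rnd K x).1 (rnd K x).2 y.1 y.2 ∂ν ∧
    (∫ y, Rev x.1 x.2 y.1 y.2 ∂ν) - (2/(σ*((K:ℝ)-1)) + tvDist ν P)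
      ≤ ∫ y, Rev (rnd K x).1 (rnd K x).2 y.1 y.2 ∂ν := by
  have hc : (0:ℝ) < (K:ℝ) - 1 := Kpos K hK
  set c := (K:ℝ) - 1 with hcdef
  set p' := (rnd K x).1 with hp'
  set q' := (rnd K x).2 with hq'
  have hple : p' ≤ x.1 := rnd_fst_le K hK x
  have hpge : x.1 - 1/c ≤ p' := rnd_fst_ge K hK x
  have hqge : x.2 ≤ q' := rnd_snd_ge K hK x
  have hqle : q' ≤ x.2 + 1/c := rnd_snd_le K hK x
  obtain ⟨⟨hx1, hx2⟩, hx3, hx4⟩ := hx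
  set D : Set (ℝ × ℝ) := {y | p' < y.1 ∧ y.1 ≤ x.1} ∪ {y | x.2 ≤ y.2 ∧ y.2 < q'} with hDdef
  have hD : MeasurableSet D := by
    apply MeasurableSet.union
    · exact (measurableSet_lt measurable_const measurable_fst).inter
        (measurableSet_le measurable_fst measurable_const)
    · exact (measurableSet_le measurable_const measurable_snd).inter
        (measurableSet_lt measurable_snd measurable_const)
  -- measure bound via smoothness and TV distance
  have hPD : (P D).toReal ≤ 2/(σ*c) := by
    set E1 : Set (ℝ × ℝ) := Set.Ioc p' x.1 ×ˢ Set.Icc 0 1 with hE1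
    set E2 : Set (ℝ × ℝ) := Set.Icc 0 1 ×ˢ Set.Ico x.2 q' with hE2
    have hsub : D ⊆ E1 ∪ E2 ∪ Boxᶜ := by
      intro y hy
      by_cases hyB : y ∈ Box
      · left
        obtain ⟨⟨hy1, hy2⟩, hy3, hy4⟩ := hyB
        rcases hy with h | h
        · exact Or.inl ⟨⟨h.1, h.2⟩, hy3, hy4⟩
        · exact Or.inr ⟨⟨hy1, hy2⟩, h.1, h.2⟩
      · exact Or.inr hyB
    have hE1v : P E1 ≤ ENNReal.ofReal ((1/c)/σ) := by
      calc P E1 ≤ volume E1 / ENNReal.ofReal σ := hsmooth E1 (measurableSet_Ioc.prod measurableSet_Icc)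
        _ ≤ ENNReal.ofReal (1/c) / ENNReal.ofReal σ := by
            apply ENNReal.div_le_div_right
            rw [hE1, Measure.volume_eq_prod, Measure.prod_prod, Real.volume_Ioc, Real.volume_Icc]
            simp only [sub_zero, ENNReal.ofReal_one, mul_one]
            exact ENNReal.ofReal_le_ofReal (by linarith)
        _ = ENNReal.ofReal ((1/c)/σ) := (ENNReal.ofReal_div_of_pos hσ).symm
    have hE2v : P E2 ≤ ENNReal.ofReal ((1/c)/σ) := by
      calc P E2 ≤ volume E2 / ENNReal.ofReal σ := hsmooth E2 (measurableSet_Icc.prod measurableSet_Ico)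
        _ ≤ ENNReal.ofReal (1/c) / ENNReal.ofReal σ := by
            apply ENNReal.div_le_div_right
            rw [hE2, Measure.volume_eq_prod, Measure.prod_prod, Real.volume_Icc, Real.volume_Ico]
            simp only [sub_zero, ENNReal.ofReal_one, one_mul]
            exact ENNReal.ofReal_le_ofReal (by linarith)
        _ = ENNReal.ofReal ((1/c)/σ) := (ENNReal.ofReal_div_of_pos hσ).symm
    have : P D ≤ ENNReal.ofReal (2/(σ*c)) := by
      calc P D ≤ P (E1 ∪ E2 ∪ Boxᶜ) := measure_mono hsub
        _ ≤ P (E1 ∪ E2) + P Boxᶜ := measure_union_le _ _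
        _ = P (E1 ∪ E2) := by rw [hPsupp, add_zero]
        _ ≤ P E1 + P E2 := measure_union_le _ _
        _ ≤ ENNReal.ofReal ((1/c)/σ) + ENNReal.ofReal ((1/c)/σ) := add_le_add hE1v hE2v
        _ = ENNReal.ofReal ((1/c)/σ + (1/c)/σ) := (ENNReal.ofReal_add (by positivity) (by positivity)).symm
        _ = ENNReal.ofReal (2/(σ*c)) := by congr 1; field_simp; ring
    calc (P D).toReal ≤ (ENNReal.ofReal (2/(σ*c))).toReal :=
          ENNReal.toReal_mono ENNReal.ofReal_ne_top this
      _ = 2/(σ*c) := ENNReal.toReal_ofReal (by positivity)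
    
  have hνD : (ν D).toReal ≤ 2/(σ*c) + tvDist ν P := (tv_bound ν P hD).trans (by linarith)
  -- pointwise inequalities
  have hpt_GFT : ∀ y ∈ Box, GFT x.1 x.2 y.1 y.2 - D.indicator (fun _ => (1:ℝ)) y
      ≤ GFT p' q' y.1 y.2 := by
    intro y hy
    obtain ⟨⟨hy1, hy2⟩, hy3, hy4⟩ := hy
    have hind0 : (0:ℝ) ≤ D.indicator (fun _ => (1:ℝ)) y :=
      Set.indicator_nonneg (fun _ _ => zero_le_one) y
    rw [GFT, GFT]
    by_cases h' : y.1 ≤ p' ∧ q' ≤ y.2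
    · have h : y.1 ≤ x.1 ∧ x.2 ≤ y.2 := ⟨h'.1.trans hple, hqge.trans h'.2⟩
      rw [if_pos h', if_pos h]
      linarith
    · rw [if_neg h']
      by_cases h : y.1 ≤ x.1 ∧ x.2 ≤ y.2
      · have hyD : y ∈ D := by
          push_neg at h'
          by_cases hcase : y.1 ≤ p'
          · exact Or.inr ⟨h.2, h' hcase⟩
          · exact Or.inl ⟨lt_of_not_ge hcase, h.1⟩
        rw [if_pos h, Set.indicator_of_mem hyD]
        simp only [mul_one, mul_zero]
        linarith
      · rw [if_neg h]
        simp only [mul_zero]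
        linarith
  have hpt_Rev : ∀ y : ℝ × ℝ, Rev x.1 x.2 y.1 y.2 - D.indicator (fun _ => (1:ℝ)) y
      ≤ Rev p' q' y.1 y.2 := by
    intro y
    have hind0 : (0:ℝ) ≤ D.indicator (fun _ => (1:ℝ)) y :=
      Set.indicator_nonneg (fun _ _ => zero_le_one) y
    rw [Rev, Rev]
    by_cases h' : y.1 ≤ p' ∧ q' ≤ y.2
    · have h : y.1 ≤ x.1 ∧ x.2 ≤ y.2 := ⟨h'.1.trans hple, hqge.trans h'.2⟩
      rw [if_pos h', if_pos h]
      simp only [mul_one]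
      linarith
    · rw [if_neg h']
      by_cases h : y.1 ≤ x.1 ∧ x.2 ≤ y.2
      · have hyD : y ∈ D := by
          push_neg at h'
          by_cases hcase : y.1 ≤ p'
          · exact Or.inr ⟨h.2, h' hcase⟩
          · exact Or.inl ⟨lt_of_not_ge hcase, h.1⟩
        rw [if_pos h, Set.indicator_of_mem hyD]
        simp only [mul_one, mul_zero]
        linarith
      · rw [if_neg h]
        simp only [mul_zero]
        linarith
  -- integrate
  have hind : Integrable (D.indicator fun _ => (1:ℝ)) ν := (integrable_const (1:ℝ)).indicator hD
  have hintind : ∫ y, D.indicator (fun _ => (1:ℝ)) y ∂ν = (ν D).toReal := by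
    have := integral_indicator_one (μ := ν) hD
    simpa [Pi.one_def, Measure.real] using this
  constructor
  · have hmono : ∫ y, (GFT x.1 x.2 y.1 y.2 - D.indicator (fun _ => (1:ℝ)) y) ∂ν
        ≤ ∫ y, GFT p' q' y.1 y.2 ∂ν := by
      apply integral_mono_ae ((integrable_GFT ν hν x.1 x.2).sub hind) (integrable_GFT ν hν p' q')
      filter_upwards [ae_mem_Box hν] with y hy using hpt_GFT y hy
    rw [integral_sub (integrable_GFT ν hν x.1 x.2) hind, hintind] at hmono
    linarith
  · have hmono : ∫ y, (Rev x.1 x.2 y.1 y.2 - D.indicator (fun _ => (1:ℝ)) y) ∂ν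
        ≤ ∫ y, Rev p' q' y.1 y.2 ∂ν := by
      apply integral_mono_ae ((integrable_Rev ν x.1 x.2).sub hind) (integrable_Rev ν p' q')
      exact ae_of_all _ hpt_Rev
    rw [integral_sub (integrable_Rev ν x.1 x.2) hind, hintind] at hmono
    linarith
lemma measurableSet_grid (K : ℕ) : MeasurableSet (grid K) := by
  have hsub : grid K ⊆ Set.range (fun ij : ℕ × ℕ =>
      (((ij.1:ℝ))/((K:ℝ)-1), ((ij.2:ℝ))/((K:ℝ)-1))) := by
    rintro x ⟨i, j, _, _, h1, h2⟩
    exact ⟨(i, j), by rw [Prod.ext_iff]; exact ⟨h1.symm, h2.symm⟩⟩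
  exact (Set.Countable.mono hsub (Set.countable_range _)).measurableSet


theorem stmt8 (σ : ℝ) (hσ : 0 < σ) (P : Measure (ℝ × ℝ)) [IsProbabilityMeasure P]
    (hPsupp : P ((Set.Icc (0:ℝ) 1 ×ˢ Set.Icc (0:ℝ) 1)ᶜ) = 0)
    (hsmooth : ∀ A : Set (ℝ × ℝ), MeasurableSet A → P A ≤ volume A / ENNReal.ofReal σ)
    (K : ℕ) (hK : 2 ≤ K) (T : ℕ) (L : Fin T → Measure (ℝ × ℝ))
    [∀ t, IsProbabilityMeasure (L t)]
    (hLsupp : ∀ t, (L t) ((Set.Icc (0:ℝ) 1 ×ˢ Set.Icc (0:ℝ) 1)ᶜ) = 0)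
    (C : ℝ) (hC : ∑ t, tvDist (L t) P ≤ C)
    (γ : Measure (ℝ × ℝ)) [IsProbabilityMeasure γ]
    (hγsupp : γ ((Set.Icc (0:ℝ) 1 ×ˢ Set.Icc (0:ℝ) 1)ᶜ) = 0)
    (hγfeas : 0 ≤ ∑ t, ∫ x, (∫ y, Rev x.1 x.2 y.1 y.2 ∂(L t)) ∂γ) :
    ∃ γhat : Measure (ℝ × ℝ), IsProbabilityMeasure γhat ∧ γhat ((grid K)ᶜ) = 0 ∧
      (∑ t, ∫ x, (∫ y, GFT x.1 x.2 y.1 y.2 ∂(L t)) ∂γhat ≥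
        (∑ t, ∫ x, (∫ y, GFT x.1 x.2 y.1 y.2 ∂(L t)) ∂γ)
          - 2 * T / (σ * ((K : ℝ) - 1)) - 2 * C) ∧
      (∑ t, ∫ x, (∫ y, Rev x.1 x.2 y.1 y.2 ∂(L t)) ∂γhat ≥
        -(2 * T / (σ * ((K : ℝ) - 1))) - 2 * C) := by
  have hc : (0:ℝ) < (K:ℝ) - 1 := Kpos K hK
  set c := (K:ℝ) - 1 with hcdef
  have hPsupp' : P Boxᶜ = 0 := hPsupp
  have hγsupp' : γ Boxᶜ = 0 := hγsupp
  have hLsupp' : ∀ t, (L t) Boxᶜ = 0 := hLsupp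
  set G : Fin T → (ℝ × ℝ) → ℝ := fun t x => ∫ y, GFT x.1 x.2 y.1 y.2 ∂(L t) with hG
  set R : Fin T → (ℝ × ℝ) → ℝ := fun t x => ∫ y, Rev x.1 x.2 y.1 y.2 ∂(L t) with hR
  have hGsm : ∀ t, StronglyMeasurable (G t) := fun t =>
    measurable_GFT2.stronglyMeasurable.integral_prod_right'
  have hRsm : ∀ t, StronglyMeasurable (R t) := fun t =>
    measurable_Rev2.stronglyMeasurable.integral_prod_right'
  have hGbd : ∀ t x, ‖G t x‖ ≤ 1 := by
    intro t x
    have := norm_integral_le_of_norm_le_const (μ := L t)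
      (f := fun y : ℝ × ℝ => GFT x.1 x.2 y.1 y.2) (C := 1) ?_
    · simpa using this
    · filter_upwards [ae_mem_Box (hLsupp' t)] with y hy
      simpa [Real.norm_eq_abs] using abs_GFT_le (p := x.1) (q := x.2) hy
  have hRbd : ∀ t, ∀ x ∈ Box, ‖R t x‖ ≤ 1 := by
    intro t x hx
    have := norm_integral_le_of_norm_le_const (μ := L t)
      (f := fun y : ℝ × ℝ => Rev x.1 x.2 y.1 y.2) (C := 1) ?_
    · simpa using this
    · refine ae_of_all _ fun y => ?_
      simpa [Real.norm_eq_abs] using abs_Rev_le hx.1 hx.2 y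
  have hγBox : ∀ᵐ x ∂γ, x ∈ Box := ae_mem_Box hγsupp'
  -- integrability over γ
  have hGint : ∀ t, Integrable (G t) γ := fun t =>
    ⟨(hGsm t).aestronglyMeasurable, HasFiniteIntegral.of_bounded (C := 1)
      (ae_of_all _ (hGbd t))⟩
  have hRint : ∀ t, Integrable (R t) γ := fun t =>
    ⟨(hRsm t).aestronglyMeasurable, HasFiniteIntegral.of_bounded (C := 1) (by
      filter_upwards [hγBox] with x hx using hRbd t x hx)⟩
  have hGrint : ∀ t, Integrable (fun x => G t (rnd K x)) γ := fun t =>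
    ⟨((hGsm t).comp_measurable (measurable_rnd K)).aestronglyMeasurable,
      HasFiniteIntegral.of_bounded (C := 1) (ae_of_all _ fun x => hGbd t _)⟩
  have hRrint : ∀ t, Integrable (fun x => R t (rnd K x)) γ := fun t =>
    ⟨((hRsm t).comp_measurable (measurable_rnd K)).aestronglyMeasurable,
      HasFiniteIntegral.of_bounded (C := 1) (by
        filter_upwards [hγBox] with x hx using hRbd t _ (rnd_mem_Box K hK hx))⟩
  -- per-t facts
  have hmap : ∀ t, (∫ x, G t x ∂(γ.map (rnd K)) = ∫ x, G t (rnd K x) ∂γ) ∧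
      (∫ x, R t x ∂(γ.map (rnd K)) = ∫ x, R t (rnd K x) ∂γ) := fun t =>
    ⟨integral_map (measurable_rnd K).aemeasurable ((hGsm t).aestronglyMeasurable),
     integral_map (measurable_rnd K).aemeasurable ((hRsm t).aestronglyMeasurable)⟩
  have keyG : ∀ t, (∫ x, G t x ∂γ) - (2/(σ*c) + tvDist (L t) P)
      ≤ ∫ x, G t x ∂(γ.map (rnd K)) := by
    intro t
    rw [(hmap t).1]
    have hmono : ∫ x, (G t x - (2/(σ*c) + tvDist (L t) P)) ∂γ
        ≤ ∫ x, G t (rnd K x) ∂γ := by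
      apply integral_mono_ae ((hGint t).sub (integrable_const _)) (hGrint t)
      filter_upwards [hγBox] with x hx
      exact (step σ hσ P hPsupp' hsmooth K hK (L t) (hLsupp' t) hx).1
    rwa [integral_sub (hGint t) (integrable_const _), integral_const, probReal_univ,
      smul_eq_mul, one_mul] at hmono
  have keyR : ∀ t, (∫ x, R t x ∂γ) - (2/(σ*c) + tvDist (L t) P)
      ≤ ∫ x, R t x ∂(γ.map (rnd K)) := by
    intro t
    rw [(hmap t).2]
    have hmono : ∫ x, (R t x - (2/(σ*c) + tvDist (L t) P)) ∂γ
        ≤ ∫ x, R t (rnd K x) ∂γ := by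
      apply integral_mono_ae ((hRint t).sub (integrable_const _)) (hRrint t)
      filter_upwards [hγBox] with x hx
      exact (step σ hσ P hPsupp' hsmooth K hK (L t) (hLsupp' t) hx).2
    rwa [integral_sub (hRint t) (integrable_const _), integral_const, probReal_univ,
      smul_eq_mul, one_mul] at hmono
  have hCnonneg : 0 ≤ C :=
    le_trans (Finset.sum_nonneg fun t _ => tvDist_nonneg (L t) P) hC
  have hsumtv : ∑ t, (2/(σ*c) + tvDist (L t) P) ≤ 2 * T / (σ * c) + C := by
    rw [Finset.sum_add_distrib, Finset.sum_const, Finset.card_univ, Fintype.card_fin]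
    have h2 : (T • (2/(σ*c)) : ℝ) = 2 * T / (σ * c) := by
      rw [nsmul_eq_mul]; field_simp
    linarith [hC, h2.le, h2.ge]
  have h1G : ∑ t, ((∫ x, G t x ∂γ) - (2/(σ*c) + tvDist (L t) P))
      ≤ ∑ t, ∫ x, G t x ∂(γ.map (rnd K)) :=
    Finset.sum_le_sum fun t _ => keyG t
  have h1R : ∑ t, ((∫ x, R t x ∂γ) - (2/(σ*c) + tvDist (L t) P))
      ≤ ∑ t, ∫ x, R t x ∂(γ.map (rnd K)) :=
    Finset.sum_le_sum fun t _ => keyR t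
  rw [Finset.sum_sub_distrib] at h1G h1R
  -- the candidate measure
  refine ⟨γ.map (rnd K), Measure.isProbabilityMeasure_map (measurable_rnd K).aemeasurable, ?_, ?_, ?_⟩
  · rw [Measure.map_apply (measurable_rnd K) (measurableSet_grid K).compl]
    apply measure_mono_null _ hγsupp'
    intro x hx
    exact fun hxB => hx (rnd_mem_grid K hK hxB)
  · simp only [ge_iff_le, hG] at h1G ⊢
    linarith
  · simp only [ge_iff_le, hR] at h1R hγfeas ⊢
    linarith
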